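/- Let M be an ε-straight R-module with filtration {F_j} as above. The extension class of 0 → F_{j-1} → F_j → F_j/F_{j-1} → 0 in *Ext^1_R(F_j/F_{j-1}, F_{j-1}) maps injectively under the natural map to *Ext^1_R(F_j/F_{j-1}, F_{j-1}/F_{j-2}); i.e., the natural map *Ext^1_R(F_j/F_{j-1}, F_{j-1}) → *Ext^1_R(F_j/F_{j-1}, F_{j-1}/F_{j-2}) is injective for all j ≥ 2. -/

import Mathlib

open MvPolynomial

/-- `a ∈ Ω = {-1,0}^n`. -/
def isOm {n : ℕ} (a : Fin n → ℤ) : Prop := ∀ i, a i = 0 ∨ a i = -1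

/-- The face prime ideal `p_a = (xᵢ : a i = -1)`. -/
noncomputable def faceIdeal {n : ℕ} (k : Type*) [CommSemiring k] (a : Fin n → ℤ) :
    Ideal (MvPolynomial (Fin n) k) :=
  Ideal.span (MvPolynomial.X '' {i | a i = -1})

/-- `|a|`, the number of `-1` entries of `a ∈ Ω`. -/
def wt {n : ℕ} (a : Fin n → ℤ) : ℕ := (Finset.univ.filter fun i => a i = -1).card

/-- The local cohomology module `H^r_I(R)` for `R = k[x₁,…,xₙ]`, as a type. -/
abbrev LC {n : ℕ} (k : Type) [Field k] (I : Ideal (MvPolynomial (Fin n) k)) (r : ℕ) : Type :=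
  ((localCohomology I r).obj
    (ModuleCat.of (MvPolynomial (Fin n) k) (MvPolynomial (Fin n) k)))

/-- A family of `k`-subspaces indexed by `ℤⁿ` is a compatible `ℤⁿ`-grading of an
`R = k[x₁,…,xₙ]`-module when multiplication by `xᵢ` raises degrees by `eᵢ`. -/
def GradingCompat {n : ℕ} (k : Type) [Field k] (M : Type*) [AddCommGroup M]
    [Module (MvPolynomial (Fin n) k) M] [Module k M]
    (g : (Fin n → ℤ) → Submodule k M) : Prop :=
  ∀ (i : Fin n) (d : Fin n → ℤ), ∀ m ∈ g d,
    (MvPolynomial.X i : MvPolynomial (Fin n) k) • m ∈ g (d + Pi.single i 1)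

/-- `g` is the grading of an `ε`-straight module structure (internal, compatible, finite
dimensional pieces, with multiplication `x^b : M_d → M_{d+b}` bijective whenever
`d i < 0 → d i + b i < 0` for all `i`). -/
def IsEpsStraight {n : ℕ} (k : Type) [Field k] (M : Type*) [AddCommGroup M]
    [Module (MvPolynomial (Fin n) k) M] [Module k M]
    (g : (Fin n → ℤ) → Submodule k M) : Prop :=
  DirectSum.IsInternal g ∧ GradingCompat k M g ∧
  (∀ d : Fin n → ℤ, Module.Finite k ↥(g d)) ∧
  ∀ (b : Fin n → ℕ) (d : Fin n → ℤ), (∀ i, d i < 0 → d i + (b i : ℤ) < 0) →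
    (∀ y ∈ g d, ((∏ i, MvPolynomial.X i ^ b i : MvPolynomial (Fin n) k)) • y = 0 → y = 0) ∧
    (∀ z ∈ g (d + fun i => (b i : ℤ)),
      ∃ y ∈ g d, ((∏ i, MvPolynomial.X i ^ b i : MvPolynomial (Fin n) k)) • y = z)

/-- The Hilbert function of the canonical `ℤⁿ`-grading of `H^{|a|}_{p_a}(R)`: the degree-`d`
piece is one-dimensional when `dᵢ < 0` exactly for the `i` with `a i = -1`, and `0`
otherwise. -/
def HilbH {n : ℕ} (k : Type) [Field k] (M : Type*) [AddCommGroup M] [Module k M]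
    (a : Fin n → ℤ) (g : (Fin n → ℤ) → Submodule k M) : Prop :=
  ∀ d : Fin n → ℤ, Module.finrank k (g d) =
    if (∀ i, (a i = -1 → d i < 0) ∧ (a i = 0 → 0 ≤ d i)) then 1 else 0

/-- The sign vector of `d ∈ ℤⁿ`: the element of `{-1,0}ⁿ` recording where `d` is negative. -/
def sgnv {n : ℕ} (d : Fin n → ℤ) : Fin n → ℤ := fun i => if d i < 0 then -1 else 0

section Helpers

variable {kk : Type*} [Field kk] {ι : Type*} [DecidableEq ι]

/-- Component extraction lemma. -/
lemma key2 {A B : Type*} [AddCommGroup A] [AddCommGroup B] [Module kk A] [Module kk B]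
    (gA : ι → Submodule kk A) (gB : ι → Submodule kk B)
    (hA : ∀ a : A, ∃ (t : Finset ι) (c : ι → A), (∀ d, c d ∈ gA d) ∧ a = ∑ d ∈ t, c d)
    (hB : iSupIndep gB)
    (f : A →ₗ[kk] B) (hf : ∀ d, ∀ a ∈ gA d, f a ∈ gB d)
    (d : ι) (a : A) (ha : f a ∈ gB d) : ∃ a' ∈ gA d, f a' = f a := by
  obtain ⟨t, c, hc, rfl⟩ := hA a
  rw [map_sum] at ha ⊢
  by_cases hd : d ∈ t
  · refine ⟨c d, hc d, ?_⟩
    have hS : (∑ d' ∈ t.erase d, f (c d')) ∈ ⨆ (d') (_ : d' ≠ d), gB d' := by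
      refine Submodule.sum_mem _ fun d' hd' => ?_
      exact Submodule.mem_iSup_of_mem d' (Submodule.mem_iSup_of_mem (Finset.ne_of_mem_erase hd')
        (hf d' _ (hc d')))
    have hdiff : (∑ d' ∈ t, f (c d')) - f (c d) = ∑ d' ∈ t.erase d, f (c d') := by
      rw [← Finset.add_sum_erase t _ hd]; abel
    have hmem : (∑ d' ∈ t, f (c d')) - f (c d) ∈ gB d := sub_mem ha (hf d _ (hc d))
    have h0 : (∑ d' ∈ t, f (c d')) - f (c d) = 0 := by
      refine Submodule.disjoint_def.mp (hB d) _ hmem ?_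
      rw [hdiff]; exact hS
    rw [sub_eq_zero] at h0
    exact h0.symm
  · refine ⟨0, zero_mem _, ?_⟩
    have hS : (∑ d' ∈ t, f (c d')) ∈ ⨆ (d') (_ : d' ≠ d), gB d' := by
      refine Submodule.sum_mem _ fun d' hd' => ?_
      exact Submodule.mem_iSup_of_mem d' (Submodule.mem_iSup_of_mem
        (fun h => hd (h ▸ hd')) (hf d' _ (hc d')))
    have h0 : (∑ d' ∈ t, f (c d')) = 0 := Submodule.disjoint_def.mp (hB d) _ ha hS
    rw [h0, map_zero]

lemma subsingleton_bot {A : Type*} [AddCommGroup A] [Module kk A] (S : Submodule kk A)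
    (h : Subsingleton ↥S) : S = ⊥ := by
  rw [Submodule.eq_bot_iff]
  intro x hx
  have : (⟨x, hx⟩ : ↥S) = ⟨0, zero_mem S⟩ := Subsingleton.elim _ _
  exact congrArg Subtype.val this

lemma wt_sgnv {n : ℕ} (d : Fin n → ℤ) :
    wt (sgnv d) = (Finset.univ.filter fun l => d l < 0).card := by
  unfold wt sgnv
  congr 1
  apply Finset.filter_congr
  intro l _
  by_cases h : d l < 0 <;> simp [h]

lemma wt_single_le {n : ℕ} (d : Fin n → ℤ) (i : Fin n) :
    wt (sgnv (d + Pi.single i 1)) ≤ wt (sgnv d) := by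
  rw [wt_sgnv, wt_sgnv]
  apply Finset.card_le_card
  intro l hl
  simp only [Finset.mem_filter, Finset.mem_univ, true_and, Pi.add_apply] at hl ⊢
  by_cases h : l = i
  · subst h; rw [Pi.single_eq_same] at hl; omega
  · rwa [Pi.single_eq_of_ne h, add_zero] at hl

lemma wt_le_single_add {n : ℕ} (d : Fin n → ℤ) (i : Fin n) :
    wt (sgnv d) ≤ wt (sgnv (d + Pi.single i 1)) + 1 := by
  rw [wt_sgnv, wt_sgnv]
  have key : (Finset.univ.filter fun l => d l < 0) ⊆
      insert i (Finset.univ.filter fun l => (d + Pi.single i 1 : Fin n → ℤ) l < 0) := by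
    intro l hl
    simp only [Finset.mem_filter, Finset.mem_univ, true_and] at hl
    rw [Finset.mem_insert]
    by_cases h : l = i
    · exact Or.inl h
    · refine Or.inr ?_
      simp only [Finset.mem_filter, Finset.mem_univ, true_and, Pi.add_apply]
      rwa [Pi.single_eq_of_ne h, add_zero]
  have h1 := Finset.card_le_card key
  have h2 := Finset.card_insert_le i (Finset.univ.filter fun l => (d + Pi.single i 1 : Fin n → ℤ) l < 0)
  omega

end Helpers

/-- Injectivity of the natural map
`*Ext¹_R(F_j/F_{j-1}, F_{j-1}) → *Ext¹_R(F_j/F_{j-1}, F_{j-1}/F_{j-2})` for the canonical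
filtration `{F_j}` of an `ε`-straight module `M` (`j ≥ 2`), expressed extension-wise:
if the pushout of a graded extension `0 → F_{j-1} → E → F_j/F_{j-1} → 0` along
`F_{j-1} → F_{j-1}/F_{j-2}` splits (equivalently, the projection `F_{j-1} → F_{j-1}/F_{j-2}`
extends to a graded map `E → F_{j-1}/F_{j-2}`), then the extension itself splits by a graded
retraction. -/
theorem stmt_16 (n : ℕ) (k : Type) [Field k] (M : Type) [AddCommGroup M]
    [Module (MvPolynomial (Fin n) k) M] [Module k M]
    [IsScalarTower k (MvPolynomial (Fin n) k) M]
    -- `M` is `ε`-straight, with grading `g`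
    (g : (Fin n → ℤ) → Submodule k M) (hg : IsEpsStraight k M g)
    -- the canonical filtration of Proposition 3.1, with graded quotients `Q j = F_j/F_{j-1}`
    (F : ℕ → Submodule (MvPolynomial (Fin n) k) M)
    (hmono : Monotone F) (hF0 : F 0 = ⊥) (hFn : F n = ⊤)
    (hFgr : ∀ j : ℕ, (F j).restrictScalars k = ⨆ d : Fin n → ℤ, (g d ⊓ (F j).restrictScalars k))
    (Q : ℕ → Type) [∀ j, AddCommGroup (Q j)] [∀ j, Module (MvPolynomial (Fin n) k) (Q j)]
    [∀ j, Module k (Q j)] [∀ j, IsScalarTower k (MvPolynomial (Fin n) k) (Q j)]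
    (π : ∀ j : ℕ, ↥(F j) →ₗ[MvPolynomial (Fin n) k] Q j)
    (hπsurj : ∀ j, Function.Surjective (π j))
    (hπker : ∀ j, LinearMap.ker (π j) = Submodule.comap (F j).subtype (F (j - 1)))
    (gQ : ∀ j : ℕ, (Fin n → ℤ) → Submodule k (Q j))
    (hgQ : ∀ j, DirectSum.IsInternal (gQ j) ∧ GradingCompat k (Q j) (gQ j))
    (hπgr : ∀ (j : ℕ) (d : Fin n → ℤ) (x : M) (hx : x ∈ F j), x ∈ g d → π j ⟨x, hx⟩ ∈ gQ j d)
    -- the quotients have the Hilbert functions of `⊕_{|a| = j} H^j_{p_a}(R)^{⊕ m_a}`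
    (hQdim : ∀ (j : ℕ) (d : Fin n → ℤ),
      Module.finrank k (gQ j d) =
        if wt (sgnv d) = j then Module.finrank k (g (sgnv d)) else 0)
    -- a degree `2 ≤ j ≤ n`
    (j : ℕ) (hj2 : 2 ≤ j) (hjn : j ≤ n)
    -- a graded extension `0 → F_{j-1} → E → F_j/F_{j-1} → 0`
    (E : Type) [AddCommGroup E] [Module (MvPolynomial (Fin n) k) E] [Module k E]
    [IsScalarTower k (MvPolynomial (Fin n) k) E]
    (gE : (Fin n → ℤ) → Submodule k E)
    (hgE : DirectSum.IsInternal gE ∧ GradingCompat k E gE)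
    (ι : ↥(F (j - 1)) →ₗ[MvPolynomial (Fin n) k] E)
    (πE : E →ₗ[MvPolynomial (Fin n) k] Q j)
    (hι : Function.Injective ι) (hπE : Function.Surjective πE)
    (hexact : LinearMap.range ι = LinearMap.ker πE)
    (hιgr : ∀ (d : Fin n → ℤ) (x : ↥(F (j - 1))), (x : M) ∈ g d → ι x ∈ gE d)
    (hπEgr : ∀ d : Fin n → ℤ, ∀ m ∈ gE d, πE m ∈ gQ j d)
    -- whose image in `*Ext¹(F_j/F_{j-1}, F_{j-1}/F_{j-2})` vanishes:
    (hpush : ∃ hmap : E →ₗ[MvPolynomial (Fin n) k] Q (j - 1),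
      (∀ d : Fin n → ℤ, ∀ m ∈ gE d, hmap m ∈ gQ (j - 1) d) ∧
      hmap.comp ι = π (j - 1)) :
    -- then the extension itself splits (by a graded retraction)
    ∃ ρ : E →ₗ[MvPolynomial (Fin n) k] ↥(F (j - 1)),
      ρ.comp ι = LinearMap.id ∧
      ∀ d : Fin n → ℤ, ∀ m ∈ gE d, ((ρ m : M) ∈ g d) := by
  classical
  obtain ⟨hmap, hmapgr, hmapι⟩ := hpush
  -- decomposition of `E` into homogeneous components
  have hdecE : ∀ e : E, ∃ (t : Finset (Fin n → ℤ)) (c : (Fin n → ℤ) → E),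
      (∀ d, c d ∈ gE d) ∧ e = ∑ d ∈ t, c d := by
    intro e
    have he : e ∈ ⨆ d, gE d := by rw [hgE.1.submodule_iSup_eq_top]; trivial
    rw [Submodule.mem_iSup_iff_exists_finsupp] at he
    obtain ⟨c, hc, hsum⟩ := he
    exact ⟨c.support, c, hc, by rw [← hsum]; rfl⟩
  -- the graded pieces of `F m`
  let gF : (m : ℕ) → (Fin n → ℤ) → Submodule k ↥(F m) := fun m d =>
    Submodule.comap (((F m).subtype).restrictScalars k) (g d)
  have hdecF : ∀ (m : ℕ) (a : ↥(F m)), ∃ (t : Finset (Fin n → ℤ))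
      (c : (Fin n → ℤ) → ↥(F m)), (∀ d, c d ∈ gF m d) ∧ a = ∑ d ∈ t, c d := by
    intro m a
    have ha : (a : M) ∈ (F m).restrictScalars k := a.2
    rw [hFgr m, Submodule.mem_iSup_iff_exists_finsupp] at ha
    obtain ⟨c, hc, hsum⟩ := ha
    refine ⟨c.support, fun d => ⟨c d, (hc d).2⟩, fun d => (hc d).1, ?_⟩
    apply Subtype.ext
    rw [← hsum]
    simp [Finsupp.sum]
  -- graded surjectivity of `π m`
  have hπonto : ∀ (m : ℕ) (d : Fin n → ℤ) (q : Q m), q ∈ gQ m d →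
      ∃ x : ↥(F m), (x : M) ∈ g d ∧ π m x = q := by
    intro m d q hq
    obtain ⟨a, rfl⟩ := hπsurj m q
    obtain ⟨a', ha', haa⟩ := key2 (gF m) (gQ m) (hdecF m) (hgQ m).1.submodule_iSupIndep
      ((π m).restrictScalars k) (fun d a ha => hπgr m d (a : M) a.2 ha) d a hq
    exact ⟨a', ha', haa⟩
  -- the graded pieces of the quotients are finite dimensional
  have hQfin : ∀ (m : ℕ) (d : Fin n → ℤ), Module.Finite k ↥(gQ m d) := by
    intro m d
    haveI := hg.2.2.1 d
    haveI : Module.Finite k ↥(g d ⊓ (F m).restrictScalars k) :=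
      Submodule.finiteDimensional_of_le inf_le_left
    let incl : ↥(g d ⊓ (F m).restrictScalars k) →ₗ[k] ↥(F m) :=
      { toFun := fun x => ⟨x.1, x.2.2⟩
        map_add' := fun x y => rfl
        map_smul' := fun a x => rfl }
    let φ : ↥(g d ⊓ (F m).restrictScalars k) →ₗ[k] ↥(gQ m d) :=
      LinearMap.codRestrict (gQ m d) (((π m).restrictScalars k) ∘ₗ incl)
        (fun x => hπgr m d x.1 x.2.2 x.2.1)
    have hφ : Function.Surjective φ := by
      intro q
      obtain ⟨x, hxg, hxq⟩ := hπonto m d q.1 q.2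
      refine ⟨⟨x.1, ⟨hxg, x.2⟩⟩, ?_⟩
      apply Subtype.ext
      show π m ⟨x.1, x.2⟩ = (q : Q m)
      exact hxq
    exact Module.Finite.of_surjective φ hφ
  -- vanishing of graded pieces of the wrong weight
  have hQbot : ∀ (m : ℕ) (d : Fin n → ℤ), wt (sgnv d) ≠ m → gQ m d = ⊥ := by
    intro m d hne
    haveI := hQfin m d
    apply subsingleton_bot
    rw [← Module.finrank_zero_iff (R := k), hQdim m d, if_neg hne]
  -- support of the filtration: `F l` vanishes in degrees of weight `> l`
  have hAf : ∀ (l : ℕ) (d : Fin n → ℤ) (x : M),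
      l < wt (sgnv d) → x ∈ g d → x ∈ F l → x = 0 := by
    intro l
    induction l with
    | zero =>
      intro d x _ _ hxF
      rw [hF0] at hxF
      simp at hxF
      exact hxF
    | succ l ih =>
      intro d x hlt hxg hxF
      have hq : π (l + 1) ⟨x, hxF⟩ ∈ gQ (l + 1) d := hπgr (l + 1) d x hxF hxg
      rw [hQbot (l + 1) d (by omega), Submodule.mem_bot] at hq
      have hker : (⟨x, hxF⟩ : ↥(F (l + 1))) ∈ LinearMap.ker (π (l + 1)) :=
        LinearMap.mem_ker.mpr hq
      rw [hπker (l + 1)] at hker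
      have hxl : x ∈ F l := by simpa using hker
      exact ih d x (by omega) hxg hxl
  -- homogeneous elements of `E` of weight `≠ j` come from `F (j-1)`
  have hrange : ∀ (d : Fin n → ℤ) (e : E), e ∈ gE d → wt (sgnv d) ≠ j →
      e ∈ LinearMap.range ι := by
    intro d e he hne
    have h1 : πE e ∈ gQ j d := hπEgr d e he
    rw [hQbot j d hne, Submodule.mem_bot] at h1
    rw [hexact, LinearMap.mem_ker]
    exact h1
  -- preimages under `ι` of homogeneous elements are homogeneous
  have hιhom : ∀ (d : Fin n → ℤ) (y : ↥(F (j - 1))), ι y ∈ gE d → (y : M) ∈ g d := by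
    intro d y hy
    obtain ⟨y', hy', hyy⟩ := key2 (gF (j - 1)) gE (hdecF (j - 1)) hgE.1.submodule_iSupIndep
      (ι.restrictScalars k) (fun d a ha => hιgr d a ha) d y hy
    have hyy' : y' = y := hι hyy
    exact hyy' ▸ hy'
  -- the inverse of `ι` on its range
  let r : ↥(LinearMap.range ι) →ₗ[MvPolynomial (Fin n) k] ↥(F (j - 1)) :=
    (LinearEquiv.ofInjective ι hι).symm.toLinearMap
  have hr : ∀ z : ↥(LinearMap.range ι), ι (r z) = (z : E) := by
    intro z
    have h1 : r z = (LinearEquiv.ofInjective ι hι).symm z := rfl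
    rw [h1]
    exact LinearEquiv.ofInjective_symm_apply (f := ι) z
  -- the degreewise retraction
  let ρneg : (d : Fin n → ℤ) → ¬ wt (sgnv d) = j → (↥(gE d) →ₗ[k] ↥(F (j - 1))) :=
    fun d h =>
    { toFun := fun x => r ⟨x.1, hrange d x.1 x.2 h⟩
      map_add' := fun x y => by
        have hx : (⟨(x + y : ↥(gE d)).1, hrange d (x + y).1 (x + y).2 h⟩ :
            ↥(LinearMap.range ι)) =
            ⟨x.1, hrange d x.1 x.2 h⟩ + ⟨y.1, hrange d y.1 y.2 h⟩ := Subtype.ext rfl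
        rw [hx, map_add]
      map_smul' := fun a x => by
        simp only [RingHom.id_apply]
        have hx : (⟨(a • x : ↥(gE d)).1, hrange d (a • x).1 (a • x).2 h⟩ :
            ↥(LinearMap.range ι)) = a • ⟨x.1, hrange d x.1 x.2 h⟩ := Subtype.ext rfl
        rw [hx, ← algebraMap_smul (MvPolynomial (Fin n) k) a, map_smul,
          algebraMap_smul] }
  let ρd : (d : Fin n → ℤ) → (↥(gE d) →ₗ[k] ↥(F (j - 1))) := fun d =>
    if h : wt (sgnv d) = j then 0 else ρneg d h
  have hρdpos : ∀ (d : Fin n → ℤ) (h : wt (sgnv d) = j) (x : ↥(gE d)), ρd d x = 0 := by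
    intro d h x
    have hd : ρd d = 0 := dif_pos h
    rw [hd]; rfl
  have hρdneg : ∀ (d : Fin n → ℤ) (h : ¬ wt (sgnv d) = j) (x : ↥(gE d)),
      ρd d x = r ⟨x.1, hrange d x.1 x.2 h⟩ := by
    intro d h x
    have hd : ρd d = ρneg d h := dif_neg h
    rw [hd]; rfl
  -- assemble `ρ₀` out of the `ρd`
  let eE : (DirectSum (Fin n → ℤ) fun d => ↥(gE d)) ≃ₗ[k] E :=
    LinearEquiv.ofBijective (DirectSum.coeLinearMap gE) hgE.1
  let ρ₀ : E →ₗ[k] ↥(F (j - 1)) :=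
    (DirectSum.toModule k (Fin n → ℤ) ↥(F (j - 1)) ρd) ∘ₗ eE.symm.toLinearMap
  have hρ₀ : ∀ (d : Fin n → ℤ) (e : E) (he : e ∈ gE d), ρ₀ e = ρd d ⟨e, he⟩ := by
    intro d e he
    have h1 : eE.symm e = DirectSum.lof k (Fin n → ℤ) (fun d => ↥(gE d)) d ⟨e, he⟩ := by
      apply eE.injective
      rw [LinearEquiv.apply_symm_apply]
      show e = DirectSum.coeLinearMap gE (DirectSum.lof k (Fin n → ℤ) (fun d => ↥(gE d)) d ⟨e, he⟩)
      rw [DirectSum.lof_eq_of, DirectSum.coeLinearMap_of]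
    calc ρ₀ e = DirectSum.toModule k (Fin n → ℤ) ↥(F (j - 1)) ρd (eE.symm e) := rfl
      _ = ρd d ⟨e, he⟩ := by rw [h1, DirectSum.toModule_lof]
  -- the basic properties of `ρ₀`
  have H1 : ∀ (d : Fin n → ℤ) (e : E) (he : e ∈ gE d), wt (sgnv d) = j → ρ₀ e = 0 := by
    intro d e he h
    rw [hρ₀ d e he]
    exact hρdpos d h _
  have H2 : ∀ (d : Fin n → ℤ) (e : E) (he : e ∈ gE d), wt (sgnv d) ≠ j →
      ι (ρ₀ e) = e := by
    intro d e he h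
    rw [hρ₀ d e he, hρdneg d h ⟨e, he⟩]
    exact hr _
  have H3 : ∀ (d : Fin n → ℤ) (e : E), e ∈ gE d → ((ρ₀ e : M) ∈ g d) := by
    intro d e he
    by_cases h : wt (sgnv d) = j
    · rw [H1 d e he h]
      simp
    · exact hιhom d (ρ₀ e) (by rw [H2 d e he h]; exact he)
  have H4hom : ∀ (d : Fin n → ℤ) (y : ↥(F (j - 1))), (y : M) ∈ g d → ρ₀ (ι y) = y := by
    intro d y hy
    have hEy : ι y ∈ gE d := hιgr d y hy
    by_cases h : wt (sgnv d) = j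
    · have hy0 : (y : M) = 0 := hAf (j - 1) d y (by omega) hy y.2
      have hy0' : y = 0 := Subtype.ext hy0
      rw [hy0', map_zero, map_zero]
    · exact hι (by rw [H2 d (ι y) hEy h])
  have H4 : ∀ y : ↥(F (j - 1)), ρ₀ (ι y) = y := by
    intro y
    obtain ⟨t, c, hc, rfl⟩ := hdecF (j - 1) y
    rw [map_sum, map_sum]
    exact Finset.sum_congr rfl fun d _ => H4hom d (c d) (hc d)
  have H5 : ∀ (i : Fin n) (d : Fin n → ℤ) (e : E), e ∈ gE d →
      ρ₀ ((X i : MvPolynomial (Fin n) k) • e) = (X i : MvPolynomial (Fin n) k) • ρ₀ e := by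
    intro i d e he
    have he' : (X i : MvPolynomial (Fin n) k) • e ∈ gE (d + Pi.single i 1) := hgE.2 i d e he
    by_cases hd : wt (sgnv d) = j
    · rw [H1 d e he hd, smul_zero]
      by_cases hd' : wt (sgnv (d + Pi.single i 1)) = j
      · exact H1 _ _ he' hd'
      · have hιz : ι (ρ₀ ((X i : MvPolynomial (Fin n) k) • e)) = (X i : MvPolynomial (Fin n) k) • e := H2 _ _ he' hd'
        have hzg : ((ρ₀ ((X i : MvPolynomial (Fin n) k) • e) : M)) ∈ g (d + Pi.single i 1) := H3 _ _ he'
        have hm0 : hmap e = 0 := by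
          have hm1 : hmap e ∈ gQ (j - 1) d := hmapgr d e he
          rw [hQbot (j - 1) d (by omega), Submodule.mem_bot] at hm1
          exact hm1
        have h1 : hmap (ι (ρ₀ ((X i : MvPolynomial (Fin n) k) • e))) = π (j - 1) (ρ₀ ((X i : MvPolynomial (Fin n) k) • e)) := by
          rw [← hmapι]; rfl
        have hmz : π (j - 1) (ρ₀ ((X i : MvPolynomial (Fin n) k) • e)) = 0 := by
          rw [← h1, hιz, map_smul, hm0, smul_zero]
        have hzF : ((ρ₀ ((X i : MvPolynomial (Fin n) k) • e) : M)) ∈ F (j - 1 - 1) := by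
          have hk : ρ₀ ((X i : MvPolynomial (Fin n) k) • e) ∈ LinearMap.ker (π (j - 1)) := LinearMap.mem_ker.mpr hmz
          rw [hπker (j - 1)] at hk
          exact hk
        have hz0 : ((ρ₀ ((X i : MvPolynomial (Fin n) k) • e) : M)) = 0 := by
          refine hAf (j - 1 - 1) (d + Pi.single i 1) _ ?_ hzg hzF
          have hwge := wt_le_single_add d i
          omega
        exact Subtype.ext hz0
    · have hre : ι (ρ₀ e) = e := H2 d e he hd
      by_cases hd' : wt (sgnv (d + Pi.single i 1)) = j
      · have hwle := wt_single_le d i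
        have h0 : ((ρ₀ e : M)) = 0 := hAf (j - 1) d _ (by omega) (H3 d e he) (ρ₀ e).2
        have h0' : ρ₀ e = 0 := Subtype.ext h0
        have he0 : e = 0 := by rw [← hre, h0', map_zero]
        rw [he0]
        simp
      · apply hι
        rw [H2 _ _ he' hd', map_smul, hre]
  have H6 : ∀ (i : Fin n) (e : E), ρ₀ ((X i : MvPolynomial (Fin n) k) • e) = (X i : MvPolynomial (Fin n) k) • ρ₀ e := by
    intro i e
    obtain ⟨t, c, hc, rfl⟩ := hdecE e
    rw [Finset.smul_sum, map_sum, map_sum, Finset.smul_sum]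
    exact Finset.sum_congr rfl fun d _ => H5 i d (c d) (hc d)
  have H7 : ∀ (p : MvPolynomial (Fin n) k) (e : E), ρ₀ (p • e) = p • ρ₀ e := by
    have key : ∀ p : MvPolynomial (Fin n) k,
        p ∈ Algebra.adjoin k (Set.range (X : Fin n → MvPolynomial (Fin n) k)) →
        ∀ e : E, ρ₀ (p • e) = p • ρ₀ e := by
      intro p hp
      induction hp using Algebra.adjoin_induction with
      | mem x hx =>
        obtain ⟨i, rfl⟩ := hx
        exact fun e => H6 i e
      | algebraMap a =>
        intro e
        rw [algebraMap_smul, algebraMap_smul, map_smul]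
      | add p q hp hq ihp ihq =>
        intro e
        rw [add_smul, add_smul, map_add, ihp e, ihq e]
      | mul p q hp hq ihp ihq =>
        intro e
        rw [mul_smul, ihp (q • e), ihq e, mul_smul]
    intro p e
    exact key p (by rw [MvPolynomial.adjoin_range_X]; trivial) e
  -- assemble the `R`-linear retraction
  let ρ : E →ₗ[MvPolynomial (Fin n) k] ↥(F (j - 1)) :=
    { toFun := ρ₀
      map_add' := fun x y => map_add ρ₀ x y
      map_smul' := fun p e => H7 p e }
  refine ⟨ρ, ?_, ?_⟩
  · apply LinearMap.ext
    intro y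
    exact H4 y
  · intro d m hm
    exact H3 d m hm
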